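/- Let Z be a real Banach space, G a subspace of Z, and z* ∈ Z*. Then dist(z*, G^⊥) = sup{ |z*(z)| : z ∈ G, ‖z‖ ≤ 1 }, where G^⊥ = { w* ∈ Z* : w*(g) = 0 for all g ∈ G }. Moreover, dist(z*, G^⊥) ≥ (1/2)·inf{ ‖z* − w*‖ : w* ∈ G^⊥, ‖w*‖ = ‖z*‖ }. -/

import Mathlib

set_option maxHeartbeats 1000000
set_option synthInstance.maxHeartbeats 200000

/-- For a real Banach space `Z`, a subspace `G ⊆ Z` and `z* ∈ Z*`:
`dist(z*, G^⊥) = sup { |z*(z)| : z ∈ G, ‖z‖ ≤ 1 }`, and moreover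
`dist(z*, G^⊥) ≥ (1/2) · inf { ‖z* - w*‖ : w* ∈ G^⊥, ‖w*‖ = ‖z*‖ }`. -/
theorem stmt5 (Z : Type*) [NormedAddCommGroup Z] [NormedSpace ℝ Z] [CompleteSpace Z]
    (G : Submodule ℝ Z) (f : StrongDual ℝ Z) :
    Metric.infDist f {g : StrongDual ℝ Z | ∀ z ∈ G, g z = 0} =
      sSup {r : ℝ | ∃ z ∈ G, ‖z‖ ≤ 1 ∧ r = |f z|} ∧
    (1 / 2) * sInf {r : ℝ | ∃ g : StrongDual ℝ Z,
        (∀ z ∈ G, g z = 0) ∧ ‖g‖ = ‖f‖ ∧ r = ‖f - g‖} ≤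
      Metric.infDist f {g : StrongDual ℝ Z | ∀ z ∈ G, g z = 0} := by
  set K : Set (StrongDual ℝ Z) := {g | ∀ z ∈ G, g z = 0} with hKdef
  set S : Set ℝ := {r : ℝ | ∃ z ∈ G, ‖z‖ ≤ 1 ∧ r = |f z|} with hSdef
  have hK0 : (0 : StrongDual ℝ Z) ∈ K := fun z _ => rfl
  have hKne : K.Nonempty := ⟨0, hK0⟩
  have hS0 : (0 : ℝ) ∈ S := ⟨0, G.zero_mem, by simp⟩
  have hSbdd : BddAbove S := by
    refine ⟨‖f‖, ?_⟩
    rintro r ⟨z, hz, hz1, rfl⟩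
    calc |f z| ≤ ‖f‖ * ‖z‖ := f.le_opNorm z
      _ ≤ ‖f‖ * 1 := by nlinarith [norm_nonneg f, norm_nonneg z]
      _ = ‖f‖ := mul_one _
  set M : ℝ := sSup S with hMdef
  have hM0 : 0 ≤ M := le_csSup hSbdd hS0
  -- restriction of f to G
  set f₀ : G →L[ℝ] ℝ := f.comp (Submodule.subtypeL G) with hf₀def
  have hf₀app : ∀ x : G, f₀ x = f (x : Z) := fun x => rfl
  have hf₀norm : ‖f₀‖ = M := by
    apply le_antisymm
    · apply ContinuousLinearMap.opNorm_le_bound _ hM0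
      intro x
      rcases eq_or_ne x 0 with rfl | hx
      · simp
      · have hx' : (0 : ℝ) < ‖x‖ := norm_pos_iff.mpr hx
        have hmem : |f (‖x‖⁻¹ • (x : Z))| ∈ S := by
          refine ⟨‖x‖⁻¹ • (x : Z), G.smul_mem _ x.2, ?_, rfl⟩
          rw [norm_smul, norm_inv, norm_norm]
          rw [show ‖(x : Z)‖ = ‖x‖ from rfl]
          rw [inv_mul_cancel₀ hx'.ne']
        have h1 : |f (‖x‖⁻¹ • (x : Z))| ≤ M := le_csSup hSbdd hmem
        rw [map_smul, smul_eq_mul, abs_mul, abs_inv, abs_norm] at h1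
        rw [hf₀app]
        show |f (x : Z)| ≤ M * ‖x‖
        have h2 : ‖x‖ * (‖x‖⁻¹ * |f (x : Z)|) ≤ ‖x‖ * M :=
          mul_le_mul_of_nonneg_left h1 hx'.le
        rw [← mul_assoc, mul_inv_cancel₀ hx'.ne', one_mul] at h2
        linarith
    · apply csSup_le ⟨0, hS0⟩
      rintro r ⟨z, hz, hz1, rfl⟩
      calc |f z| = |f₀ ⟨z, hz⟩| := rfl
        _ ≤ ‖f₀‖ * ‖(⟨z, hz⟩ : G)‖ := f₀.le_opNorm _
        _ = ‖f₀‖ * ‖z‖ := rfl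
        _ ≤ ‖f₀‖ * 1 := mul_le_mul_of_nonneg_left hz1 (norm_nonneg f₀)
        _ = ‖f₀‖ := mul_one _
  -- part 1
  have part1 : Metric.infDist f K = M := by
    apply le_antisymm
    · obtain ⟨F, hF, hFn⟩ := exists_extension_norm_eq G f₀
      have hmem : f - F ∈ K := by
        intro z hz
        have := hF ⟨z, hz⟩
        simp only [ContinuousLinearMap.sub_apply]
        rw [this, hf₀app]
        simp
      calc Metric.infDist f K ≤ dist f (f - F) := Metric.infDist_le_dist_of_mem hmem
        _ = ‖F‖ := by rw [dist_eq_norm]; congr 1; abel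
        _ = M := by rw [hFn, hf₀norm]
    · by_contra h
      push_neg at h
      obtain ⟨w, hwK, hwd⟩ := (Metric.infDist_lt_iff hKne).mp h
      have : M ≤ dist f w := by
        rw [dist_eq_norm]
        apply csSup_le ⟨0, hS0⟩
        rintro r ⟨z, hz, hz1, rfl⟩
        have : f z = (f - w) z := by
          simp [ContinuousLinearMap.sub_apply, hwK z hz]
        rw [this]
        calc |(f - w) z| ≤ ‖f - w‖ * ‖z‖ := (f - w).le_opNorm z
          _ ≤ ‖f - w‖ * 1 := by
              apply mul_le_mul_of_nonneg_left hz1 (norm_nonneg _)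
          _ = ‖f - w‖ := mul_one _
      linarith
  refine ⟨part1, ?_⟩
  -- part 2
  set T : Set ℝ := {r : ℝ | ∃ g : StrongDual ℝ Z,
      (∀ z ∈ G, g z = 0) ∧ ‖g‖ = ‖f‖ ∧ r = ‖f - g‖} with hTdef
  have hTbdd : BddBelow T := by
    refine ⟨0, ?_⟩
    rintro r ⟨g, _, _, rfl⟩
    exact norm_nonneg _
  have hd0 : 0 ≤ Metric.infDist f K := Metric.infDist_nonneg
  by_cases hf : f = 0
  · have h0T : (0 : ℝ) ∈ T := ⟨0, fun z _ => rfl, by rw [hf], by simp [hf]⟩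
    have := csInf_le hTbdd h0T
    nlinarith
  by_cases htriv : ∀ g ∈ K, g = (0 : StrongDual ℝ Z)
  · have hT : T = ∅ := by
      ext r
      simp only [Set.mem_setOf_eq, Set.mem_empty_iff_false, iff_false]
      rintro ⟨g, hg, hgn, rfl⟩
      exact hf (by rw [← norm_eq_zero, ← hgn, htriv g hg, norm_zero])
    rw [hT, Real.sInf_empty]
    simpa using hd0
  · push_neg at htriv
    obtain ⟨u, huK, hu0⟩ := htriv
    have hu' : (0 : ℝ) < ‖u‖ := norm_pos_iff.mpr hu0
    have key : sInf T ≤ 2 * Metric.infDist f K := by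
      apply le_of_forall_pos_le_add
      intro ε hε
      obtain ⟨w, hwK, hwd⟩ := (Metric.infDist_lt_iff hKne).mp
        (show Metric.infDist f K < Metric.infDist f K + ε / 4 by linarith)
      rw [dist_eq_norm] at hwd
      -- get a nonzero near-minimizer
      obtain ⟨w', hw'K, hw'0, hw'd⟩ :
          ∃ w' ∈ K, w' ≠ 0 ∧ ‖f - w'‖ < Metric.infDist f K + ε / 2 := by
        rcases eq_or_ne w 0 with rfl | hw
        · set δ : ℝ := (ε / 4) / ‖u‖ with hδ
          have hδ0 : 0 < δ := div_pos (by linarith) hu'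
          have h1 : ‖δ • u‖ = ε / 4 := by
            rw [norm_smul, Real.norm_eq_abs, abs_of_pos hδ0, hδ,
              div_mul_cancel₀ _ hu'.ne']
          refine ⟨δ • u, fun z hz => ?_, ?_, ?_⟩
          · simp [ContinuousLinearMap.smul_apply, huK z hz]
          · intro h
            rw [h, norm_zero] at h1
            linarith
          · calc ‖f - δ • u‖ ≤ ‖f - 0‖ + ‖δ • u‖ := by
                  have := norm_sub_le (f - 0) (δ • u - 0)
                  simpa [sub_sub] using norm_sub_le_norm_sub_add_norm_sub f 0 (δ • u)
              _ < Metric.infDist f K + ε / 4 + ε / 4 := by rw [h1]; linarith [hwd]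
              _ = Metric.infDist f K + ε / 2 := by ring
        · exact ⟨w, hwK, hw, by linarith⟩
      have hw'n : (0 : ℝ) < ‖w'‖ := norm_pos_iff.mpr hw'0
      set c : ℝ := ‖f‖ / ‖w'‖ with hc
      have hc0 : 0 ≤ c := div_nonneg (norm_nonneg _) hw'n.le
      set g : StrongDual ℝ Z := c • w' with hg
      have hgK : ∀ z ∈ G, g z = 0 := fun z hz => by
        simp [hg, ContinuousLinearMap.smul_apply, hw'K z hz]
      have hgn : ‖g‖ = ‖f‖ := by
        rw [hg, norm_smul, Real.norm_eq_abs, abs_of_nonneg hc0, hc,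
          div_mul_cancel₀ _ hw'n.ne']
      have hmemT : ‖f - g‖ ∈ T := ⟨g, hgK, hgn, rfl⟩
      have hest : ‖f - g‖ ≤ 2 * ‖f - w'‖ := by
        have h1 : ‖f - g‖ ≤ ‖f - w'‖ + ‖w' - g‖ := by
          have := norm_sub_le (f - w') (g - w')
          calc ‖f - g‖ = ‖(f - w') + (w' - g)‖ := by congr 1; abel
            _ ≤ ‖f - w'‖ + ‖w' - g‖ := norm_add_le _ _
        have h2 : ‖w' - g‖ = |‖w'‖ - ‖f‖| := by
          have : w' - g = (1 - c) • w' := by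
            rw [hg]; module
          rw [this, norm_smul, Real.norm_eq_abs]
          rw [show |1 - c| * ‖w'‖ = |(1 - c) * ‖w'‖| by
            rw [abs_mul, abs_of_pos hw'n]]
          congr 1
          rw [sub_mul, one_mul, hc, div_mul_cancel₀ _ hw'n.ne']
        have h3 : |‖w'‖ - ‖f‖| ≤ ‖f - w'‖ := by
          have := abs_norm_sub_norm_le w' f
          rwa [show ‖w' - f‖ = ‖f - w'‖ from norm_sub_rev _ _] at this
        linarith
      calc sInf T ≤ ‖f - g‖ := csInf_le hTbdd hmemT
        _ ≤ 2 * ‖f - w'‖ := hest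
        _ ≤ 2 * (Metric.infDist f K + ε / 2) := by linarith
        _ = 2 * Metric.infDist f K + ε := by ring
    linarith
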